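/- Let (B, M) be a reduced local ring with B/M uncountable and with distinct minimal primes Q₁, Q₂, and let b ∈ B. Let R be an infinite subring of B with |R| < |B/M| and R ∩ Q₁ = R ∩ Q₂. Then there exists a subring S of B with R ⊆ S, |S| = |R|, S ∩ Q₁ = S ∩ Q₂, and such that S contains an element of the coset b + M². -/

import Mathlib

open Polynomial Cardinal

/-- For an MG-subring `R` and `b ∈ B`, there is a larger MG-subring `S` of the same
cardinality containing an element of the coset `b + M²`. -/
theorem stmt_14 (B : Type*) [CommRing B] [IsNoetherianRing B] [IsLocalRing B] [IsReduced B]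
    [Uncountable (B ⧸ IsLocalRing.maximalIdeal B)]
    (Q₁ Q₂ : Ideal B) (hQ₁ : Q₁ ∈ minimalPrimes B) (hQ₂ : Q₂ ∈ minimalPrimes B)
    (hne : Q₁ ≠ Q₂)
    (b : B)
    (R : Subring B) [Infinite ↥R]
    (hcard : Cardinal.mk ↥R < Cardinal.mk (B ⧸ IsLocalRing.maximalIdeal B))
    (hglue : ∀ y ∈ R, y ∈ Q₁ ↔ y ∈ Q₂) :
    ∃ S : Subring B, R ≤ S ∧
      Cardinal.mk ↥S = Cardinal.mk ↥R ∧
      (∀ y ∈ S, y ∈ Q₁ ↔ y ∈ Q₂) ∧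
      (∃ s ∈ S, s - b ∈ (IsLocalRing.maximalIdeal B) ^ 2) := by
  classical
  set M := IsLocalRing.maximalIdeal B with hMdef
  have hP1 : Q₁.IsPrime := hQ₁.1.1
  have hP2 : Q₂.IsPrime := hQ₂.1.1
  have hQM : ∀ Q : Ideal B, Q.IsPrime → Q ≤ M := fun Q hQ =>
    IsLocalRing.le_maximalIdeal hQ.ne_top
  have hM2 : ∀ Q Q' : Ideal B, Q ∈ minimalPrimes B → Q' ∈ minimalPrimes B → Q ≠ Q' →
      ¬ (M ^ 2 ≤ Q) := by
    intro Q Q' hQ hQ' hneq hle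
    haveI := hQ.1.1
    have hMQ : M ≤ Q := Ideal.IsPrime.le_of_pow_le hle
    have hQ'Q : Q' ≤ Q := (hQM Q' hQ'.1.1).trans hMQ
    exact hneq (hQ'Q.antisymm (hQ.2 ⟨hQ'.1.1, bot_le⟩ hQ'Q)).symm
  obtain ⟨a₁, ha₁M, ha₁⟩ := SetLike.not_le_iff_exists.mp (hM2 Q₁ Q₂ hQ₁ hQ₂ hne)
  obtain ⟨a₂, ha₂M, ha₂⟩ := SetLike.not_le_iff_exists.mp (hM2 Q₂ Q₁ hQ₂ hQ₁ hne.symm)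
  obtain ⟨a, haM, ha1, ha2⟩ : ∃ a, a ∈ M ^ 2 ∧ a ∉ Q₁ ∧ a ∉ Q₂ := by
    by_cases h1 : a₁ ∈ Q₂
    · by_cases h2 : a₂ ∈ Q₁
      · refine ⟨a₁ + a₂, add_mem ha₁M ha₂M, fun h => ha₁ ?_, fun h => ha₂ ?_⟩
        · simpa using Q₁.sub_mem h h2
        · have := Q₂.sub_mem h h1
          simpa using this
      · exact ⟨a₂, ha₂M, h2, ha₂⟩
    · exact ⟨a₁, ha₁M, ha₁, h1⟩
  -- a section of the quotient map B → B/M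
  have hπ : Function.Surjective (Ideal.Quotient.mk M) := Ideal.Quotient.mk_surjective
  set T : (B ⧸ M) → B := Function.surjInv hπ with hT
  have hTspec : ∀ q, Ideal.Quotient.mk M (T q) = q := Function.surjInv_eq hπ
  -- key finiteness: for each prime and poly with a coefficient outside it,
  -- only finitely many residues are "bad"
  have key : ∀ (Q : Ideal B), Q.IsPrime → a ∉ Q → ∀ f : Polynomial R,
      (∃ n, (f.coeff n : B) ∉ Q) →
      {q : B ⧸ M | Polynomial.eval₂ R.subtype (b + a * T q) f ∈ Q}.Finite := by
    intro Q hQ haQ f hf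
    haveI := hQ
    obtain ⟨n, hn⟩ := hf
    set ψ : ↥R →+* B ⧸ Q := (Ideal.Quotient.mk Q).comp R.subtype with hψ
    set g : Polynomial (B ⧸ Q) :=
      (f.map ψ).comp (Polynomial.C (Ideal.Quotient.mk Q b) +
        Polynomial.C (Ideal.Quotient.mk Q a) * Polynomial.X) with hg
    have haz : (Ideal.Quotient.mk Q a) ≠ 0 := by
      simpa [Ideal.Quotient.eq_zero_iff_mem] using haQ
    have hfz : f.map ψ ≠ 0 := by
      intro h
      apply hn
      have h2 : (f.map ψ).coeff n = 0 := by rw [h]; simp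
      rw [Polynomial.coeff_map] at h2
      simpa [hψ, Ideal.Quotient.eq_zero_iff_mem] using h2
    have hgz : g ≠ 0 := by
      intro hzero
      rw [hg, Polynomial.comp_eq_zero_iff] at hzero
      rcases hzero with h | ⟨-, h⟩
      · exact hfz h
      · apply haz
        have h2 := congrArg (fun p => p.coeff 1) h
        simpa using h2
    have hfin := Polynomial.finite_setOf_isRoot hgz
    have hinj : Function.Injective (fun q : B ⧸ M => Ideal.Quotient.mk Q (T q)) := by
      intro q q' h
      have h1 : T q - T q' ∈ Q := Ideal.Quotient.eq.mp h
      have h2 : T q - T q' ∈ M := hQM Q hQ h1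
      calc q = Ideal.Quotient.mk M (T q) := (hTspec q).symm
        _ = Ideal.Quotient.mk M (T q') := Ideal.Quotient.eq.mpr h2
        _ = q' := hTspec q'
    refine Set.Finite.subset (hfin.preimage hinj.injOn) ?_
    intro q hq
    simp only [Set.mem_setOf_eq] at hq
    simp only [Set.mem_preimage, Set.mem_setOf_eq, Polynomial.IsRoot]
    have h0 : Ideal.Quotient.mk Q (Polynomial.eval₂ R.subtype (b + a * T q) f) = 0 :=
      Ideal.Quotient.eq_zero_iff_mem.mpr hq
    rw [Polynomial.hom_eval₂] at h0
    rw [hg, Polynomial.eval_comp]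
    rw [Polynomial.eval₂_eq_eval_map] at h0
    rw [Polynomial.eval_map] at *
    convert h0 using 2
    · rfl
    simp [hψ]
  -- the bad set and its cardinality
  set Bad : Polynomial R → Set (B ⧸ M) := fun f =>
    {q | (∃ n, (f.coeff n : B) ∉ Q₁) ∧ Polynomial.eval₂ R.subtype (b + a * T q) f ∈ Q₁} ∪
    {q | (∃ n, (f.coeff n : B) ∉ Q₂) ∧ Polynomial.eval₂ R.subtype (b + a * T q) f ∈ Q₂}
    with hBad
  have hBadfin : ∀ f, (Bad f).Finite := by
    intro f
    apply Set.Finite.union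
    · by_cases h : ∃ n, (f.coeff n : B) ∉ Q₁
      · exact (key Q₁ hP1 ha1 f h).subset fun q hq => hq.2
      · convert Set.finite_empty
        ext q; simp only [Set.mem_setOf_eq, Set.mem_empty_iff_false, iff_false]
        exact fun hq => h hq.1
    · by_cases h : ∃ n, (f.coeff n : B) ∉ Q₂
      · exact (key Q₂ hP2 ha2 f h).subset fun q hq => hq.2
      · convert Set.finite_empty
        ext q; simp only [Set.mem_setOf_eq, Set.mem_empty_iff_false, iff_false]
        exact fun hq => h hq.1
  have hcount : Cardinal.mk ↥(⋃ f, Bad f) < Cardinal.mk (B ⧸ M) := by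
    have h1 : Cardinal.mk ↥(⋃ f, Bad f) ≤ Cardinal.mk (Polynomial R) * ⨆ f, Cardinal.mk ↥(Bad f) :=
      Cardinal.mk_iUnion_le _
    have h2 : (⨆ f, Cardinal.mk ↥(Bad f)) ≤ Cardinal.aleph0 :=
      ciSup_le' fun f => ((hBadfin f).countable).le_aleph0
    have h3 : Cardinal.mk (Polynomial R) = Cardinal.mk ↥R := by
      rw [Polynomial.cardinalMk_eq_max, max_eq_left (Cardinal.infinite_iff.mp ‹Infinite ↥R›)]
    have h4 : Cardinal.mk ↥R * Cardinal.aleph0 = Cardinal.mk ↥R :=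
      Cardinal.mul_eq_left (Cardinal.infinite_iff.mp ‹Infinite ↥R›) (Cardinal.infinite_iff.mp ‹Infinite ↥R›) Cardinal.aleph0_ne_zero
    calc Cardinal.mk ↥(⋃ f, Bad f)
        ≤ Cardinal.mk (Polynomial R) * ⨆ f, Cardinal.mk ↥(Bad f) := h1
      _ ≤ Cardinal.mk ↥R * Cardinal.aleph0 := by
          rw [h3]; exact mul_le_mul_right h2 _
      _ = Cardinal.mk ↥R := h4
      _ < Cardinal.mk (B ⧸ M) := hcard
  obtain ⟨q₀, hq₀⟩ : ∃ q₀, q₀ ∉ ⋃ f, Bad f := by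
    by_contra h
    push_neg at h
    have : (⋃ f, Bad f) = Set.univ := Set.eq_univ_of_forall h
    rw [this, Cardinal.mk_univ] at hcount
    exact lt_irrefl _ hcount
  set b' : B := b + a * T q₀ with hb'def
  have hb' : ∀ (f : Polynomial R) (Q : Ideal B), Q = Q₁ ∨ Q = Q₂ →
      (∃ n, (f.coeff n : B) ∉ Q) → Polynomial.eval₂ R.subtype b' f ∉ Q := by
    intro f Q hQch hf hmem
    apply hq₀
    apply Set.mem_iUnion.mpr ⟨f, ?_⟩
    rcases hQch with rfl | rfl
    · exact Or.inl ⟨hf, hmem⟩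
    · exact Or.inr ⟨hf, hmem⟩
  have hall : ∀ (f : Polynomial R) (Q : Ideal B), (∀ n, (f.coeff n : B) ∈ Q) →
      Polynomial.eval₂ R.subtype b' f ∈ Q := by
    intro f Q h
    rw [Polynomial.eval₂_eq_sum, Polynomial.sum]
    exact Ideal.sum_mem _ fun n _ => Q.mul_mem_right _ (h n)
  set φ : Polynomial R →+* B := Polynomial.eval₂RingHom R.subtype b' with hφ
  refine ⟨φ.range, ?_, ?_, ?_, ⟨b', ?_, ?_⟩⟩
  · intro r hr
    exact ⟨Polynomial.C ⟨r, hr⟩, by simp [hφ]⟩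
  · apply le_antisymm
    · have h1 : Cardinal.mk ↥φ.range ≤ Cardinal.mk (Polynomial R) := by
        have : (φ.range : Set B) = Set.range φ := by ext x; simp [RingHom.mem_range]
        calc Cardinal.mk ↥φ.range = Cardinal.mk ↥(Set.range ⇑φ) := by rw [← this]; rfl
          _ ≤ Cardinal.mk (Polynomial R) := Cardinal.mk_range_le
      have h3 : Cardinal.mk (Polynomial R) = Cardinal.mk ↥R := by
        rw [Polynomial.cardinalMk_eq_max, max_eq_left (Cardinal.infinite_iff.mp ‹Infinite ↥R›)]
      exact h1.trans h3.le
    · apply Cardinal.mk_le_mk_of_subset (s := (R : Set B)) (t := (φ.range : Set B))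
      intro r hr
      exact ⟨Polynomial.C ⟨r, hr⟩, by simp [hφ]⟩
  · intro y hy
    obtain ⟨f, rfl⟩ := RingHom.mem_range.mp hy
    by_cases hc : ∀ n, (f.coeff n : B) ∈ Q₁
    · have hc2 : ∀ n, (f.coeff n : B) ∈ Q₂ := fun n => (hglue _ (f.coeff n).2).mp (hc n)
      have e1 := hall f Q₁ hc
      have e2 := hall f Q₂ hc2
      simp only [hφ, Polynomial.coe_eval₂RingHom]
      exact ⟨fun _ => e2, fun _ => e1⟩
    · push_neg at hc
      have hc2 : ∃ n, (f.coeff n : B) ∉ Q₂ := by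
        obtain ⟨n, hn⟩ := hc
        exact ⟨n, fun h => hn ((hglue _ (f.coeff n).2).mpr h)⟩
      have e1 := hb' f Q₁ (Or.inl rfl) hc
      have e2 := hb' f Q₂ (Or.inr rfl) hc2
      simp only [hφ, Polynomial.coe_eval₂RingHom]
      exact ⟨fun h => absurd h e1, fun h => absurd h e2⟩
  · exact ⟨Polynomial.X, by simp [hφ]⟩
  · have : b' - b = a * T q₀ := by rw [hb'def]; ring
    rw [this]
    exact Ideal.mul_mem_right _ _ haM
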